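/- For γ > 1, the function f(z) = (γ-1)(z^{γ+1} - 1) - (γ+1)z(z^{γ-1} - 1) satisfies f(z) > 0 for all z > 1. -/

import Mathlib

open Real Set

/-- Inner inequality: `(γ-1) x^γ - γ x^(γ-1) + 1 > 0` for `x > 1`. -/
lemma stmt_0_aux (γ : ℝ) (hγ : 1 < γ) (x : ℝ) (hx : 1 < x) :
    0 < (γ - 1) * x ^ γ - γ * x ^ (γ - 1) + 1 := by
  have hx0 : (0:ℝ) < x := lt_trans one_pos hx
  set u : ℝ := 1 / x with hu
  have hu0 : 0 < u := by positivity
  have hu1 : u < 1 := by rw [hu]; rw [div_lt_one hx0]; exact hx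
  have hs : -1 ≤ u - 1 := by linarith
  have hs' : u - 1 ≠ 0 := sub_ne_zero_of_ne hu1.ne
  have hb := one_add_mul_self_lt_rpow_one_add hs hs' hγ
  rw [add_sub_cancel] at hb
  -- hb : 1 + γ * (u - 1) < u ^ γ
  have hxγ : (0:ℝ) < x ^ γ := rpow_pos_of_pos hx0 _
  have huγ : u ^ γ * x ^ γ = 1 := by
    rw [← mul_rpow hu0.le hx0.le, hu, one_div, inv_mul_cancel₀ hx0.ne', one_rpow]
  have hux : u * x ^ γ = x ^ (γ - 1) := by
    have h : x ^ (γ - 1) * x = x ^ γ := by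
      rw [← Real.rpow_add_one hx0.ne']; norm_num
    rw [hu, ← h]; field_simp
  have key := mul_lt_mul_of_pos_right hb hxγ
  rw [huγ] at key
  nlinarith [key, hux, hxγ]

theorem stmt_0 (γ : ℝ) (hγ : 1 < γ) (z : ℝ) (hz : 1 < z) :
    (γ - 1) * (z ^ (γ + 1) - 1) - (γ + 1) * z * (z ^ (γ - 1) - 1) > 0 := by
  set F : ℝ → ℝ := fun x => (γ - 1) * (x ^ (γ + 1) - 1) - (γ + 1) * x * (x ^ (γ - 1) - 1)
    with hF
  have hderiv : ∀ x : ℝ, 0 < x →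
      HasDerivAt F ((γ + 1) * ((γ - 1) * x ^ γ - γ * x ^ (γ - 1) + 1)) x := by
    intro x hx0
    have h1 : HasDerivAt (fun y : ℝ => y ^ (γ + 1)) ((γ + 1) * x ^ (γ + 1 - 1)) x :=
      Real.hasDerivAt_rpow_const (Or.inl hx0.ne')
    have h2 : HasDerivAt (fun y : ℝ => y ^ (γ - 1)) ((γ - 1) * x ^ (γ - 1 - 1)) x :=
      Real.hasDerivAt_rpow_const (Or.inl hx0.ne')
    have h3 : HasDerivAt (fun y : ℝ => (γ + 1) * y * (y ^ (γ - 1) - 1))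
        ((γ + 1) * (x ^ (γ - 1) - 1) + (γ + 1) * x * ((γ - 1) * x ^ (γ - 1 - 1))) x := by
      have := ((hasDerivAt_id x).const_mul (γ + 1)).mul (h2.sub_const 1)
      refine this.congr_deriv ?_
      simp only [id_eq]
      ring
    have h4 : HasDerivAt F
        ((γ - 1) * ((γ + 1) * x ^ (γ + 1 - 1)) -
          ((γ + 1) * (x ^ (γ - 1) - 1) + (γ + 1) * x * ((γ - 1) * x ^ (γ - 1 - 1)))) x :=
      (((h1.sub_const 1).const_mul (γ - 1)).sub h3)
    convert h4 using 1
    have e1 : γ + 1 - 1 = γ := by ring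
    have e2 : x * x ^ (γ - 1 - 1) = x ^ (γ - 1) := by
      rw [mul_comm, ← Real.rpow_add_one hx0.ne']
      norm_num
    rw [e1]
    linear_combination (γ + 1) * (γ - 1) * e2
  have hcont : ContinuousOn F (Ici (1:ℝ)) := fun x hx =>
    (hderiv x (lt_of_lt_of_le one_pos hx)).continuousAt.continuousWithinAt
  have hmono : StrictMonoOn F (Ici (1:ℝ)) := by
    apply strictMonoOn_of_deriv_pos (convex_Ici 1) hcont
    intro x hx
    rw [interior_Ici] at hx
    rw [(hderiv x (lt_trans one_pos hx)).deriv]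
    have := stmt_0_aux γ hγ x hx
    have : (0:ℝ) < γ + 1 := by linarith
    positivity
  have h1 : F 1 = 0 := by simp [hF]
  have := hmono (self_mem_Ici) (le_of_lt hz : (1:ℝ) ≤ z) hz
  rw [h1] at this
  exact this
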